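/- Let φ(t,λ) be the solution on [0,a₁] of −y'' + q(t)y = λ y with initial conditions y(0) = 1, y'(0) = h, where q is continuous and real-valued. Then for |λ| → ∞, φ(t,λ) = cos(√λ t) + (h/√λ) sin(√λ t) + O((1/√λ) exp(|τ| t)) uniformly for t ∈ [0,a₁], where τ = Im √λ. -/

import Mathlib

open Set Complex

lemma norm_cos_le' (z : ℂ) : ‖Complex.cos z‖ ≤ Real.exp |z.im| := by
  rw [Complex.cos]
  calc ‖(Complex.exp (z*I) + Complex.exp (-z*I))/2‖
      ≤ (‖Complex.exp (z*I)‖ + ‖Complex.exp (-z*I)‖) / 2 := by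
        rw [norm_div]; simp only [Complex.norm_ofNat]
        gcongr; exact norm_add_le _ _
    _ ≤ (Real.exp |z.im| + Real.exp |z.im|) / 2 := by
        rw [Complex.norm_exp, Complex.norm_exp]
        gcongr <;> simp [Complex.mul_re, Complex.I_re, Complex.I_im] <;>
          [exact neg_le_abs z.im; exact le_abs_self z.im]
    _ = Real.exp |z.im| := by ring

lemma norm_sin_le' (z : ℂ) : ‖Complex.sin z‖ ≤ Real.exp |z.im| := by
  rw [Complex.sin]
  calc ‖(Complex.exp (-z*I) - Complex.exp (z*I)) * I / 2‖
      ≤ (‖Complex.exp (-z*I)‖ + ‖Complex.exp (z*I)‖) / 2 := by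
        rw [norm_div, norm_mul]; simp only [Complex.norm_I, mul_one, Complex.norm_ofNat]
        gcongr; exact norm_sub_le _ _
    _ ≤ (Real.exp |z.im| + Real.exp |z.im|) / 2 := by
        rw [Complex.norm_exp, Complex.norm_exp]
        gcongr <;> simp [Complex.mul_re, Complex.I_re, Complex.I_im] <;>
          [exact le_abs_self z.im; exact neg_le_abs z.im]
    _ = Real.exp |z.im| := by ring

/-- asymptotics of the solution φ(t,λ) of −y'' + q y = λ y, y(0)=1, y'(0)=h:
φ(t,λ) = cos(√λ t) + (h/√λ) sin(√λ t) + O((1/√λ) exp(|Im √λ| t)) uniformly on [0,a₁]. -/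
theorem statement1 (a₁ : ℝ) (ha₁ : 0 < a₁) (q : ℝ → ℝ) (hq : ContinuousOn q (Icc 0 a₁))
    (h : ℝ) (φ : ℂ → ℝ → ℂ)
    (hφsmooth : ∀ lam : ℂ, ContDiffOn ℝ 2 (φ lam) (Icc 0 a₁))
    (hφode : ∀ lam : ℂ, ∀ t ∈ Icc 0 a₁,
      -(deriv (deriv (φ lam)) t) + (q t : ℂ) * φ lam t = lam * φ lam t)
    (hφ0 : ∀ lam : ℂ, φ lam 0 = 1)
    (hφ'0 : ∀ lam : ℂ, deriv (φ lam) 0 = (h : ℂ)) :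
    ∃ C > 0, ∃ R > 0, ∀ lam : ℂ, R ≤ ‖lam‖ → ∀ t ∈ Icc 0 a₁,
      ‖φ lam t - (Complex.cos (lam ^ (1/2 : ℂ) * t)
        + ((h : ℂ) / lam ^ (1/2 : ℂ)) * Complex.sin (lam ^ (1/2 : ℂ) * t))‖
      ≤ C / ‖lam ^ (1/2 : ℂ)‖ * Real.exp (|(lam ^ (1/2 : ℂ)).im| * t) := by
  -- bound on q
  obtain ⟨Q₀, hQ₀⟩ : ∃ Q₀, ∀ x ∈ Icc 0 a₁, ‖q x‖ ≤ Q₀ :=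
    (isCompact_Icc.exists_bound_of_continuousOn hq)
  set Q : ℝ := max Q₀ 0 with hQdef
  have hQ0 : 0 ≤ Q := le_max_right _ _
  have hQ : ∀ x ∈ Icc 0 a₁, |q x| ≤ Q := fun x hx => (hQ₀ x hx).trans (le_max_left _ _)
  set K : ℝ := 2 * (1 + |h|) with hKdef
  have hK0 : (0:ℝ) < K := by positivity
  set m : ℝ := max 1 (2 * Q * a₁) with hmdef
  have hm1 : (1:ℝ) ≤ m := le_max_left _ _
  have hm0 : (0:ℝ) < m := lt_of_lt_of_le one_pos hm1
  refine ⟨Q * K * a₁ + 1, by positivity, m^2 + ‖((q 0 : ℂ))‖ + 1, by positivity, ?_⟩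
  intro lam hlam
  -- basic facts about s = lam^(1/2)
  set s : ℂ := lam ^ (1/2 : ℂ) with hsdef
  have hlam0 : lam ≠ 0 := by
    intro h0
    rw [h0, norm_zero] at hlam
    nlinarith [norm_nonneg ((q 0 : ℂ))]
  have hs0 : s ≠ 0 := by
    rw [hsdef, Ne, Complex.cpow_eq_zero_iff]
    simp [hlam0]
  have hss : s * s = lam := by
    rw [hsdef, ← Complex.cpow_add _ _ hlam0]
    norm_num
  have hsnorm : ‖s‖ = ‖lam‖ ^ (1/2 : ℝ) := by
    rw [hsdef, Complex.norm_cpow_of_ne_zero hlam0]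
    norm_num
  have hsm : m ≤ ‖s‖ := by
    rw [hsnorm]
    have h1 : (m^2 : ℝ) ≤ ‖lam‖ := by
      nlinarith [norm_nonneg ((q 0 : ℂ))]
    calc m = (m^2) ^ (1/2 : ℝ) := by
            rw [← Real.rpow_natCast m 2, ← Real.rpow_mul hm0.le]; norm_num
      _ ≤ ‖lam‖ ^ (1/2 : ℝ) := by
            apply Real.rpow_le_rpow (by positivity) h1 (by norm_num)
  have hs1 : (1:ℝ) ≤ ‖s‖ := hm1.trans hsm
  have hsQ : 2 * Q * a₁ ≤ ‖s‖ := (le_max_right _ _).trans hsm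
  have hspos : (0:ℝ) < ‖s‖ := lt_of_lt_of_le one_pos hs1
  set τ : ℝ := |s.im| with hτdef
  have hτ0 : 0 ≤ τ := abs_nonneg _
  -- the within-derivative
  set g : ℝ → ℂ := derivWithin (φ lam) (Icc 0 a₁) with hgdef
  have hg1 : ContDiffOn ℝ 1 g (Icc 0 a₁) :=
    (hφsmooth lam).derivWithin (uniqueDiffOn_Icc ha₁) (by norm_num)
  have hgc : ContinuousOn g (Icc 0 a₁) := hg1.continuousOn
  have hφc : ContinuousOn (φ lam) (Icc 0 a₁) := (hφsmooth lam).continuousOn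
  have hIoosub : Ioo 0 a₁ ⊆ Icc 0 a₁ := Ioo_subset_Icc_self
  have hnhds : ∀ x ∈ Ioo (0:ℝ) a₁, Icc (0:ℝ) a₁ ∈ nhds x := by
    intro x hx
    exact Icc_mem_nhds hx.1 hx.2
  have hgD : ∀ x ∈ Ioo (0:ℝ) a₁, g x = deriv (φ lam) x := by
    intro x hx
    exact derivWithin_of_mem_nhds (hnhds x hx)
  have hφdiff : ∀ x ∈ Ioo (0:ℝ) a₁, HasDerivAt (φ lam) (g x) x := by
    intro x hx
    have h1 : DifferentiableAt ℝ (φ lam) x :=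
      (((hφsmooth lam).differentiableOn (by norm_num)) x (hIoosub hx)).differentiableAt
        (hnhds x hx)
    rw [hgD x hx]
    exact h1.hasDerivAt
  have hgdiff : ∀ x ∈ Ioo (0:ℝ) a₁, HasDerivAt g (((q x : ℂ) - lam) * φ lam x) x := by
    intro x hx
    have h1 : DifferentiableAt ℝ g x :=
      ((hg1.differentiableOn (by norm_num)) x (hIoosub hx)).differentiableAt (hnhds x hx)
    have h2 : g =ᶠ[nhds x] deriv (φ lam) := by
      filter_upwards [isOpen_Ioo.mem_nhds hx] with y hy using hgD y hy
    have h3 : deriv g x = deriv (deriv (φ lam)) x := h2.deriv_eq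
    have h4 : deriv (deriv (φ lam)) x = ((q x : ℂ) - lam) * φ lam x := by
      have := hφode lam x (hIoosub hx)
      linear_combination -this
    have := h1.hasDerivAt
    rwa [h3, h4] at this
  -- endpoint: g 0 = h
  have hg0 : g 0 = (h : ℂ) := by
    have hlamq : lam ≠ ((q 0 : ℝ) : ℂ) := by
      intro hcontra
      rw [hcontra] at hlam
      have : ‖((q 0 : ℂ))‖ < m ^ 2 + ‖((q 0 : ℂ))‖ + 1 := by nlinarith
      exact absurd hlam (not_le.mpr this)
    have hD0 : DifferentiableAt ℝ (deriv (φ lam)) 0 := by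
      by_contra hnd
      have h1 : deriv (deriv (φ lam)) 0 = 0 := deriv_zero_of_not_differentiableAt hnd
      have h2 := hφode lam 0 (left_mem_Icc.mpr ha₁.le)
      rw [h1, hφ0 lam] at h2
      simp only [neg_zero, mul_one, zero_add] at h2
      exact hlamq h2.symm
    have hNB : (nhdsWithin (0:ℝ) (Ioo 0 a₁)).NeBot := by
      apply mem_closure_iff_nhdsWithin_neBot.mp
      rw [closure_Ioo ha₁.ne]
      exact left_mem_Icc.mpr ha₁.le
    have hgt : Filter.Tendsto g (nhdsWithin 0 (Ioo 0 a₁)) (nhds (g 0)) :=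
      ((hgc 0 (left_mem_Icc.mpr ha₁.le)).mono hIoosub)
    have hDt : Filter.Tendsto (deriv (φ lam)) (nhdsWithin 0 (Ioo 0 a₁))
        (nhds (deriv (φ lam) 0)) :=
      (hD0.continuousAt.continuousWithinAt)
    have hgt' : Filter.Tendsto (deriv (φ lam)) (nhdsWithin 0 (Ioo 0 a₁)) (nhds (g 0)) := by
      apply hgt.congr'
      filter_upwards [self_mem_nhdsWithin] with y hy using (hgD y hy)
    rw [tendsto_nhds_unique hgt' hDt, hφ'0 lam]
  -- the Volterra integral equation
  have key : ∀ t ∈ Icc (0:ℝ) a₁,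
      φ lam t - (Complex.cos (s * t) + ((h:ℂ)/s) * Complex.sin (s * t))
      = ∫ ξ in (0:ℝ)..t, Complex.sin (s * ((t:ℂ) - (ξ:ℂ))) * (q ξ : ℂ) * φ lam ξ / s := by
    intro t ht
    have hIccsub : Icc (0:ℝ) t ⊆ Icc 0 a₁ := Icc_subset_Icc le_rfl ht.2
    have hIoosub' : Ioo (0:ℝ) t ⊆ Ioo 0 a₁ := Ioo_subset_Ioo le_rfl ht.2
    set W : ℝ → ℂ := fun ξ => g ξ * Complex.sin (s * ((t:ℂ) - (ξ:ℂ))) / s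
        + φ lam ξ * Complex.cos (s * ((t:ℂ) - (ξ:ℂ))) with hWdef
    have hWcont : ContinuousOn W (Icc 0 t) := by
      apply ContinuousOn.add
      · apply ContinuousOn.div_const
        apply ContinuousOn.mul (hgc.mono hIccsub)
        exact (Complex.continuous_sin.comp
          ((continuous_const.mul (continuous_const.sub Complex.continuous_ofReal)))).continuousOn
      · apply ContinuousOn.mul (hφc.mono hIccsub)
        exact (Complex.continuous_cos.comp
          ((continuous_const.mul (continuous_const.sub Complex.continuous_ofReal)))).continuousOn
    have hWderiv : ∀ ξ ∈ Ioo (0:ℝ) t,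
        HasDerivAt W (Complex.sin (s * ((t:ℂ) - (ξ:ℂ))) * (q ξ : ℂ) * φ lam ξ / s) ξ := by
      intro ξ hξ
      have hξ' : ξ ∈ Ioo (0:ℝ) a₁ := hIoosub' hξ
      -- derivative of trig parts
      have hinnerC : HasDerivAt (fun z : ℂ => s * ((t:ℂ) - z)) (-s) ((ξ:ℝ) : ℂ) := by
        simpa using ((hasDerivAt_id ((ξ:ℝ):ℂ)).const_sub (t:ℂ)).const_mul s
      have hsin : HasDerivAt (fun y : ℝ => Complex.sin (s * ((t:ℂ) - (y:ℂ))))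
          (Complex.cos (s * ((t:ℂ) - (ξ:ℂ))) * (-s)) ξ :=
        ((Complex.hasDerivAt_sin (s * ((t:ℂ) - (ξ:ℂ)))).comp ((ξ:ℝ):ℂ) (h := fun z : ℂ => s * ((t:ℂ) - z)) hinnerC).comp_ofReal
      have hcos : HasDerivAt (fun y : ℝ => Complex.cos (s * ((t:ℂ) - (y:ℂ))))
          (-Complex.sin (s * ((t:ℂ) - (ξ:ℂ))) * (-s)) ξ :=
        ((Complex.hasDerivAt_cos (s * ((t:ℂ) - (ξ:ℂ)))).comp ((ξ:ℝ):ℂ) (h := fun z : ℂ => s * ((t:ℂ) - z)) hinnerC).comp_ofReal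
      have hW : HasDerivAt W
          ((((q ξ : ℂ) - lam) * φ lam ξ * Complex.sin (s * ((t:ℂ) - (ξ:ℂ)))
            + g ξ * (Complex.cos (s * ((t:ℂ) - (ξ:ℂ))) * (-s))) / s
           + (g ξ * Complex.cos (s * ((t:ℂ) - (ξ:ℂ)))
            + φ lam ξ * (-Complex.sin (s * ((t:ℂ) - (ξ:ℂ))) * (-s)))) ξ :=
        (((hgdiff ξ hξ').mul hsin).div_const s).add ((hφdiff ξ hξ').mul hcos)
      convert hW using 1
      rw [← hss]
      field_simp
      ring
    -- FTC
    have hint : IntervalIntegrable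
        (fun ξ : ℝ => Complex.sin (s * ((t:ℂ) - (ξ:ℂ))) * (q ξ : ℂ) * φ lam ξ / s)
        MeasureTheory.volume 0 t := by
      apply ContinuousOn.intervalIntegrable
      rw [uIcc_of_le ht.1]
      apply ContinuousOn.div_const
      apply ContinuousOn.mul
      · apply ContinuousOn.mul
        · exact (Complex.continuous_sin.comp
            ((continuous_const.mul (continuous_const.sub Complex.continuous_ofReal)))).continuousOn
        · exact Complex.continuous_ofReal.comp_continuousOn (hq.mono hIccsub)
      · exact hφc.mono hIccsub
    have hFTC := intervalIntegral.integral_eq_sub_of_hasDeriv_right_of_le ht.1 hWcont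
      (fun x hx => (hWderiv x hx).hasDerivWithinAt) hint
    rw [hFTC, hWdef]
    simp only []
    rw [hg0, hφ0 lam]
    have h1 : s * ((t:ℂ) - (t:ℂ)) = 0 := by ring
    have h2 : s * ((t:ℂ) - ((0:ℝ):ℂ)) = s * (t:ℂ) := by push_cast; ring
    rw [h1, h2, Complex.sin_zero, Complex.cos_zero]
    field_simp
    ring
  -- supremum of the weighted norm
  set u : ℝ → ℝ := fun ξ => ‖φ lam ξ‖ * Real.exp (-(τ * ξ)) with hudef
  have hucont : ContinuousOn u (Icc 0 a₁) :=
    hφc.norm.mul ((Real.continuous_exp.comp (continuous_const.mul continuous_id).neg).continuousOn)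
  obtain ⟨t₀, ht₀, ht₀max'⟩ :=
    isCompact_Icc.exists_isMaxOn (nonempty_Icc.mpr ha₁.le) hucont
  have ht₀max : ∀ ξ ∈ Icc (0:ℝ) a₁, u ξ ≤ u t₀ := fun ξ hξ => ht₀max' hξ
  set Y : ℝ := u t₀ with hYdef
  have hY0 : 0 ≤ Y := by
    rw [hYdef, hudef]; positivity
  have hφbound : ∀ ξ ∈ Icc (0:ℝ) a₁, ‖φ lam ξ‖ ≤ Y * Real.exp (τ * ξ) := by
    intro ξ hξ
    have h1 : u ξ ≤ Y := ht₀max ξ hξ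
    have e : Real.exp (-(τ * ξ)) * Real.exp (τ * ξ) = 1 := by
      rw [← Real.exp_add]; simp
    calc ‖φ lam ξ‖ = (‖φ lam ξ‖ * Real.exp (-(τ * ξ))) * Real.exp (τ * ξ) := by
          rw [mul_assoc, e, mul_one]
      _ ≤ Y * Real.exp (τ * ξ) :=
          mul_le_mul_of_nonneg_right h1 (Real.exp_pos _).le
  -- bound on the integral term
  have hibound : ∀ t ∈ Icc (0:ℝ) a₁,
      ‖∫ ξ in (0:ℝ)..t, Complex.sin (s * ((t:ℂ) - (ξ:ℂ))) * (q ξ : ℂ) * φ lam ξ / s‖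
        ≤ Q * Y * Real.exp (τ * t) / ‖s‖ * t := by
    intro t ht
    have hb := intervalIntegral.norm_integral_le_of_norm_le_const
      (C := Q * Y * Real.exp (τ * t) / ‖s‖)
      (f := fun ξ : ℝ => Complex.sin (s * ((t:ℂ) - (ξ:ℂ))) * (q ξ : ℂ) * φ lam ξ / s)
      (a := 0) (b := t) ?_
    · calc ‖∫ ξ in (0:ℝ)..t, Complex.sin (s * ((t:ℂ) - (ξ:ℂ))) * (q ξ : ℂ) * φ lam ξ / s‖
          ≤ Q * Y * Real.exp (τ * t) / ‖s‖ * |t - 0| := hb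
        _ = Q * Y * Real.exp (τ * t) / ‖s‖ * t := by
          rw [sub_zero, _root_.abs_of_nonneg ht.1]
    · intro x hx
      rw [Set.uIoc_of_le ht.1] at hx
      have hx1 : (0:ℝ) ≤ x := hx.1.le
      have hx2 : x ≤ t := hx.2
      have hxA : x ∈ Icc (0:ℝ) a₁ := ⟨hx1, hx2.trans ht.2⟩
      have hsinb : ‖Complex.sin (s * ((t:ℂ) - (x:ℂ)))‖ ≤ Real.exp (τ * (t - x)) := by
        refine (norm_sin_le' _).trans_eq ?_
        congr 1
        have him : (s * ((t:ℂ) - (x:ℂ))).im = s.im * (t - x) := by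
          simp [Complex.mul_im]
        rw [him, abs_mul, _root_.abs_of_nonneg (sub_nonneg.mpr hx2), hτdef]
      have hqb : ‖((q x : ℝ) : ℂ)‖ ≤ Q := by
        rw [Complex.norm_real, Real.norm_eq_abs]; exact hQ x hxA
      have hφb := hφbound x hxA
      rw [norm_div, norm_mul, norm_mul]
      have hnum : ‖Complex.sin (s * ((t:ℂ) - (x:ℂ)))‖ * ‖((q x : ℝ) : ℂ)‖ * ‖φ lam x‖
          ≤ Real.exp (τ * (t - x)) * Q * (Y * Real.exp (τ * x)) := by
        have h1 : ‖Complex.sin (s * ((t:ℂ) - (x:ℂ)))‖ * ‖((q x : ℝ) : ℂ)‖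
            ≤ Real.exp (τ * (t - x)) * Q :=
          mul_le_mul hsinb hqb (norm_nonneg _) (Real.exp_pos _).le
        exact mul_le_mul h1 hφb (norm_nonneg _) (by positivity)
      have hee : Real.exp (τ * (t - x)) * Real.exp (τ * x) = Real.exp (τ * t) := by
        rw [← Real.exp_add]; ring_nf
      have heq : Real.exp (τ * (t - x)) * Q * (Y * Real.exp (τ * x)) / ‖s‖
          = Q * Y * Real.exp (τ * t) / ‖s‖ := by
        rw [← hee]; ring
      rw [← heq]
      exact div_le_div_of_nonneg_right hnum hspos.le
  -- bound Y ≤ K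
  have hYK : Y ≤ K := by
    have h1 := key t₀ ht₀
    have hφeq : φ lam t₀ = (Complex.cos (s * t₀) + ((h:ℂ)/s) * Complex.sin (s * t₀))
        + ∫ ξ in (0:ℝ)..t₀, Complex.sin (s * ((t₀:ℂ) - (ξ:ℂ))) * (q ξ : ℂ) * φ lam ξ / s := by
      linear_combination h1
    have him : (s * (t₀:ℂ)).im = s.im * t₀ := by simp [Complex.mul_im]
    have habs : |s.im * t₀| = τ * t₀ := by
      rw [abs_mul, _root_.abs_of_nonneg ht₀.1, hτdef]
    have hcosb : ‖Complex.cos (s * (t₀:ℂ))‖ ≤ Real.exp (τ * t₀) := by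
      refine (norm_cos_le' _).trans_eq ?_
      rw [him, habs]
    have hsinb : ‖Complex.sin (s * (t₀:ℂ))‖ ≤ Real.exp (τ * t₀) := by
      refine (norm_sin_le' _).trans_eq ?_
      rw [him, habs]
    have hhs : ‖(h:ℂ)/s‖ ≤ |h| := by
      rw [norm_div, Complex.norm_real, Real.norm_eq_abs]
      exact div_le_self (abs_nonneg h) hs1
    have hnφ : ‖φ lam t₀‖ ≤ Real.exp (τ * t₀) + |h| * Real.exp (τ * t₀)
        + Q * Y * Real.exp (τ * t₀) / ‖s‖ * t₀ := by
      rw [hφeq]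
      refine (norm_add_le _ _).trans ?_
      have hA : ‖Complex.cos (s * (t₀:ℂ)) + ((h:ℂ)/s) * Complex.sin (s * (t₀:ℂ))‖
          ≤ Real.exp (τ * t₀) + |h| * Real.exp (τ * t₀) := by
        refine (norm_add_le _ _).trans (add_le_add hcosb ?_)
        rw [norm_mul]
        exact mul_le_mul hhs hsinb (norm_nonneg _) (abs_nonneg h)
      exact add_le_add hA (hibound t₀ ht₀)
    have hYval : Y = ‖φ lam t₀‖ * Real.exp (-(τ * t₀)) := rfl
    have e : Real.exp (τ * t₀) * Real.exp (-(τ * t₀)) = 1 := by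
      rw [← Real.exp_add]; simp
    have hY1 : Y ≤ 1 + |h| + Q * Y * t₀ / ‖s‖ := by
      rw [hYval]
      calc ‖φ lam t₀‖ * Real.exp (-(τ * t₀))
          ≤ (Real.exp (τ * t₀) + |h| * Real.exp (τ * t₀)
              + Q * Y * Real.exp (τ * t₀) / ‖s‖ * t₀) * Real.exp (-(τ * t₀)) :=
            mul_le_mul_of_nonneg_right hnφ (Real.exp_pos _).le
        _ = (1 + |h| + Q * Y * t₀ / ‖s‖) * (Real.exp (τ * t₀) * Real.exp (-(τ * t₀))) := by
            ring
        _ = 1 + |h| + Q * Y * t₀ / ‖s‖ := by rw [e, mul_one]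
    have hhalf : Q * Y * t₀ / ‖s‖ ≤ Y / 2 := by
      rw [div_le_iff₀ hspos]
      have h1 : (Q * Y) * t₀ ≤ (Q * Y) * a₁ :=
        mul_le_mul_of_nonneg_left ht₀.2 (mul_nonneg hQ0 hY0)
      nlinarith [mul_le_mul_of_nonneg_left hsQ hY0]
    show Y ≤ 2 * (1 + |h|)
    linarith [hY1, hhalf]
  -- final estimate
  intro t ht
  rw [key t ht]
  refine (hibound t ht).trans ?_
  have hstep : Q * Y * Real.exp (τ * t) / ‖s‖ * t = (Q * Y * t) * Real.exp (τ * t) / ‖s‖ := by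
    ring
  rw [hstep]
  have hfin : Q * Y * t ≤ Q * K * a₁ + 1 := by
    have h1 : (Q * Y) * t ≤ (Q * Y) * a₁ :=
      mul_le_mul_of_nonneg_left ht.2 (mul_nonneg hQ0 hY0)
    have h2 : (Q * Y) * a₁ ≤ (Q * K) * a₁ :=
      mul_le_mul_of_nonneg_right (mul_le_mul_of_nonneg_left hYK hQ0) ha₁.le
    linarith
  calc (Q * Y * t) * Real.exp (τ * t) / ‖s‖
      ≤ (Q * K * a₁ + 1) * Real.exp (τ * t) / ‖s‖ := by
        gcongr
    _ = (Q * K * a₁ + 1) / ‖s‖ * Real.exp (τ * t) := by ring
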